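/- Let a ≤ c ≤ b be real numbers and let P, q : ℝ → ℝ be continuous on [a,b]. Suppose y₋, y₊, z₋, z₊ : ℝ → ℝ are twice continuously differentiable on [a,b] and satisfy on [a,b]: y₋″ = P·y₋, y₊″ = P·y₊, z₋″ = P·z₋ + q·y₋, z₊″ = P·z₊ + q·y₊, together with the boundary conditions z₋(a) = z₋′(a) = 0 and z₊(b) = z₊′(b) = 0. Then y₊(c)·z₋′(c) + z₊(c)·y₋′(c) − z₋(c)·y₊′(c) − y₋(c)·z₊′(c) = ∫_a^b q(x)·y₋(x)·y₊(x) dx. -/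

import Mathlib

open Set

lemma ftc_sub {a b c d : ℝ} (F g : ℝ → ℝ)
    (hF : ∀ x ∈ Icc a b, HasDerivWithinAt F (g x) (Icc a b) x)
    (hg : ContinuousOn g (Icc a b))
    (hc : c ∈ Icc a b) (hd : d ∈ Icc a b) (hcd : c ≤ d) :
    ∫ x in c..d, g x = F d - F c := by
  have hsub : Icc c d ⊆ Icc a b := Icc_subset_Icc hc.1 hd.2
  apply intervalIntegral.integral_eq_sub_of_hasDeriv_right_of_le hcd
  · exact fun x hx => ((hF x (hsub hx)).continuousWithinAt).mono hsub
  · intro x hx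
    exact (hF x (hsub (Ioo_subset_Icc_self hx))).mono_of_mem_nhdsWithin
      (Icc_mem_nhdsGT_of_mem ⟨hc.1.trans hx.1.le, hx.2.trans_le hd.2⟩)
  · exact ((hg.mono hsub).mono (by rw [uIcc_of_le hcd])).intervalIntegrable

/-- the integration-by-parts identity behind Lemma 3.1.  If on `[a,b]`
the functions `y₋, y₊` solve `y″ = P y` and `z₋, z₊` solve `z″ = P z + q y∓`… more
precisely `z₋″ = P z₋ + q y₋`, `z₊″ = P z₊ + q y₊`, with `z₋(a) = z₋′(a) = 0` and
`z₊(b) = z₊′(b) = 0`, then for any `c ∈ [a,b]`,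
`y₊(c) z₋′(c) + z₊(c) y₋′(c) − z₋(c) y₊′(c) − y₋(c) z₊′(c) = ∫_a^b q y₋ y₊`. -/
theorem stmt3 (a b c : ℝ) (hac : a ≤ c) (hcb : c ≤ b)
    (P q : ℝ → ℝ) (hP : ContinuousOn P (Icc a b)) (hq : ContinuousOn q (Icc a b))
    (ym yp zm zp dym dyp dzm dzp : ℝ → ℝ)
    (hym : ∀ x ∈ Icc a b, HasDerivWithinAt ym (dym x) (Icc a b) x)
    (hym' : ∀ x ∈ Icc a b, HasDerivWithinAt dym (P x * ym x) (Icc a b) x)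
    (hyp : ∀ x ∈ Icc a b, HasDerivWithinAt yp (dyp x) (Icc a b) x)
    (hyp' : ∀ x ∈ Icc a b, HasDerivWithinAt dyp (P x * yp x) (Icc a b) x)
    (hzm : ∀ x ∈ Icc a b, HasDerivWithinAt zm (dzm x) (Icc a b) x)
    (hzm' : ∀ x ∈ Icc a b, HasDerivWithinAt dzm (P x * zm x + q x * ym x) (Icc a b) x)
    (hzp : ∀ x ∈ Icc a b, HasDerivWithinAt zp (dzp x) (Icc a b) x)
    (hzp' : ∀ x ∈ Icc a b, HasDerivWithinAt dzp (P x * zp x + q x * yp x) (Icc a b) x)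
    (hzma : zm a = 0) (hdzma : dzm a = 0) (hzpb : zp b = 0) (hdzpb : dzp b = 0) :
    yp c * dzm c + zp c * dym c - zm c * dyp c - ym c * dzp c =
      ∫ x in a..b, q x * ym x * yp x := by
  have hab : a ≤ b := hac.trans hcb
  have haI : a ∈ Icc a b := ⟨le_refl a, hab⟩
  have hbI : b ∈ Icc a b := ⟨hab, le_refl b⟩
  have hcI : c ∈ Icc a b := ⟨hac, hcb⟩
  have hymc : ContinuousOn ym (Icc a b) := fun x hx => (hym x hx).continuousWithinAt
  have hypc : ContinuousOn yp (Icc a b) := fun x hx => (hyp x hx).continuousWithinAt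
  have hg : ContinuousOn (fun x => q x * ym x * yp x) (Icc a b) :=
    (hq.mul hymc).mul hypc
  have hW1 : ∀ x ∈ Icc a b, HasDerivWithinAt (fun x => yp x * dzm x - zm x * dyp x)
      (q x * ym x * yp x) (Icc a b) x := by
    intro x hx
    have := ((hyp x hx).mul (hzm' x hx)).sub ((hzm x hx).mul (hyp' x hx))
    exact this.congr_deriv (by ring)
  have hW2 : ∀ x ∈ Icc a b, HasDerivWithinAt (fun x => zp x * dym x - ym x * dzp x)
      (-(q x * ym x * yp x)) (Icc a b) x := by
    intro x hx
    have := ((hzp x hx).mul (hym' x hx)).sub ((hym x hx).mul (hzp' x hx))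
    exact this.congr_deriv (by ring)
  have h1 : ∫ x in a..c, q x * ym x * yp x =
      (yp c * dzm c - zm c * dyp c) - (yp a * dzm a - zm a * dyp a) :=
    ftc_sub _ _ hW1 hg haI hcI hac
  have h2 : ∫ x in c..b, -(q x * ym x * yp x) =
      (zp b * dym b - ym b * dzp b) - (zp c * dym c - ym c * dzp c) :=
    ftc_sub _ _ hW2 (hg.neg) hcI hbI hcb
  rw [intervalIntegral.integral_neg] at h2
  have hint1 : IntervalIntegrable (fun x => q x * ym x * yp x) MeasureTheory.volume a c :=
    ((hg.mono (Icc_subset_Icc le_rfl hcb)).mono (by rw [uIcc_of_le hac])).intervalIntegrable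
  have hint2 : IntervalIntegrable (fun x => q x * ym x * yp x) MeasureTheory.volume c b :=
    ((hg.mono (Icc_subset_Icc hac le_rfl)).mono (by rw [uIcc_of_le hcb])).intervalIntegrable
  rw [← intervalIntegral.integral_add_adjacent_intervals hint1 hint2, h1]
  have h2' : ∫ x in c..b, q x * ym x * yp x = zp c * dym c - ym c * dzp c := by
    rw [hzpb, hdzpb] at h2; linarith
  rw [h2', hzma, hdzma]
  ring
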